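/- Let f : [0,a] → [0,a] be a strictly concave, nonnegative map with f(0) = 0 and a > 0. Define the isoclinic point b := sup { x ∈ [0,a] : |f'₋(x)| < f(x)/x }, where f'₋ denotes the left one-sided derivative (which exists by concavity). Then b ≥ a/2. -/

import Mathlib

open Set Filter Topology

/-- Lemma (isoclinic): for a strictly concave nonnegative self-map `f` of `[0,a]`
with `f 0 = 0`, the isoclinic point `b = sup {x : |f'₋(x)| < f(x)/x}` satisfies
`b ≥ a/2`.  Here `f'` denotes the left one-sided derivative of `f`. -/
theorem isoclinic_ge_half (a : ℝ) (ha : 0 < a) (f f' : ℝ → ℝ)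
    (hmap : MapsTo f (Icc 0 a) (Icc 0 a))
    (hnonneg : ∀ x ∈ Icc 0 a, 0 ≤ f x)
    (hconc : StrictConcaveOn ℝ (Icc 0 a) f)
    (hf0 : f 0 = 0)
    (hderiv : ∀ x ∈ Ioc (0:ℝ) a, HasDerivWithinAt f (f' x) (Iio x) x) :
    a / 2 ≤ sSup {x | x ∈ Ioc (0:ℝ) a ∧ |f' x| < f x / x} := by
  set S := {x | x ∈ Ioc (0:ℝ) a ∧ |f' x| < f x / x} with hSdef
  by_contra hcon
  push_neg at hcon
  set b := sSup S with hbdef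
  have hb0 : 0 ≤ b := Real.sSup_nonneg (fun x hx => le_of_lt hx.1.1)
  have hbdd : BddAbove S := ⟨a, fun x hx => hx.1.2⟩
  -- tangent line lies above the graph
  have tangent : ∀ x ∈ Ioc (0:ℝ) a, ∀ y ∈ Icc (0:ℝ) a, f y ≤ f x + f' x * (y - x) := by
    intro x hx y hy
    rcases eq_or_ne y x with rfl | hne
    · simp
    have hslope : Tendsto (slope f x) (𝓝[<] x) (𝓝 (f' x)) := by
      have h := (hasDerivWithinAt_iff_tendsto_slope).1 (hderiv x hx)
      rwa [Set.diff_singleton_eq_self (notMem_Iio.2 le_rfl)] at h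
    have hlim : Tendsto (fun z => slope f x z * (y - x)) (𝓝[<] x)
        (𝓝 (f' x * (y - x))) := hslope.mul_const _
    have hxpos := hx.1
    have hxa := hx.2
    have hy0 := hy.1
    have hya := hy.2
    have hxmem : x ∈ Icc (0:ℝ) a := ⟨le_of_lt hxpos, hxa⟩
    have hev : ∀ᶠ z in 𝓝[<] x, f y - f x ≤ slope f x z * (y - x) := by
      rcases lt_or_gt_of_ne hne with hylt | hygt
      · -- y < x : take z ∈ (max (x/2) y, x)
        have hm : max (x/2) y < x := max_lt (by linarith) hylt
        filter_upwards [Ioo_mem_nhdsLT_of_mem ⟨hm, le_rfl⟩] with z hz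
        have hz1 : max (x/2) y < z := hz.1
        have hzy : y < z := lt_of_le_of_lt (le_max_right _ _) hz1
        have hz0 : 0 < z := lt_of_lt_of_le (by linarith : (0:ℝ) < x/2)
          (le_trans (le_max_left _ _) (le_of_lt hz1))
        have hzx : z < x := hz.2
        have hzmem : z ∈ Icc (0:ℝ) a := ⟨le_of_lt hz0, by linarith⟩
        -- concavity: z = t*y + s*x with t = (x-z)/(x-y), s = (z-y)/(x-y)
        have hxy : (0:ℝ) < x - y := by linarith
        have ht : (0:ℝ) < (x - z)/(x - y) := div_pos (by linarith) hxy
        have hs : (0:ℝ) < (z - y)/(x - y) := div_pos (by linarith) hxy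
        have hts : (x - z)/(x - y) + (z - y)/(x - y) = 1 := by
          field_simp
          ring
        have hcc := hconc.concaveOn.2 hy hxmem (le_of_lt ht) (le_of_lt hs) hts
        have hxy' : x - y ≠ 0 := ne_of_gt hxy
        have hcomb : ((x - z)/(x - y)) • y + ((z - y)/(x - y)) • x = z := by
          simp only [smul_eq_mul]; field_simp; ring
        rw [hcomb] at hcc
        simp only [smul_eq_mul] at hcc
        have hkey : (x - z) * f y + (z - y) * f x ≤ (x - y) * f z := by
          rw [div_mul_eq_mul_div, div_mul_eq_mul_div, ← add_div,
            div_le_iff₀ hxy] at hcc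
          nlinarith [hcc]
        have hzx' : z - x < 0 := by linarith
        rw [slope_def_field, div_mul_eq_mul_div, le_div_iff_of_neg hzx']
        nlinarith [hkey]
      · -- y > x : take z ∈ (x/2, x)
        filter_upwards [Ioo_mem_nhdsLT_of_mem ⟨(by linarith : x/2 < x), le_rfl⟩] with z hz
        have hz0 : 0 < z := lt_trans (by linarith) hz.1
        have hzx : z < x := hz.2
        have hzmem : z ∈ Icc (0:ℝ) a := ⟨le_of_lt hz0, by linarith⟩
        -- concavity: x = t*z + s*y with t = (y-x)/(y-z), s = (x-z)/(y-z)
        have hyz : (0:ℝ) < y - z := by linarith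
        have ht : (0:ℝ) < (y - x)/(y - z) := div_pos (by linarith) hyz
        have hs : (0:ℝ) < (x - z)/(y - z) := div_pos (by linarith) hyz
        have hts : (y - x)/(y - z) + (x - z)/(y - z) = 1 := by field_simp; ring
        have hcc := hconc.concaveOn.2 hzmem hy (le_of_lt ht) (le_of_lt hs) hts
        have hyz' : y - z ≠ 0 := ne_of_gt hyz
        have hcomb : ((y - x)/(y - z)) • z + ((x - z)/(y - z)) • y = x := by
          simp only [smul_eq_mul]; field_simp; ring
        rw [hcomb] at hcc
        simp only [smul_eq_mul] at hcc
        have hkey : (y - x) * f z + (x - z) * f y ≤ (y - z) * f x := by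
          rw [div_mul_eq_mul_div, div_mul_eq_mul_div, ← add_div,
            div_le_iff₀ hyz] at hcc
          nlinarith [hcc]
        have hzx' : z - x < 0 := by linarith
        rw [slope_def_field, div_mul_eq_mul_div, le_div_iff_of_neg hzx']
        nlinarith [hkey]
    have := ge_of_tendsto hlim hev
    linarith
  -- strict inequality f' x < f x / x always
  have fderiv_lt : ∀ x ∈ Ioc (0:ℝ) a, f' x < f x / x := by
    intro x hx
    have hx0 := hx.1
    have hxa := hx.2
    have hhalf : x/2 ∈ Icc (0:ℝ) a := ⟨by linarith, by linarith⟩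
    have ht := tangent x hx (x/2) hhalf
    have hsc := hconc.2 (show (0:ℝ) ∈ Icc (0:ℝ) a from ⟨le_rfl, le_of_lt ha⟩)
      (show x ∈ Icc (0:ℝ) a from ⟨le_of_lt hx0, hxa⟩) (ne_of_lt hx0)
      (by norm_num : (0:ℝ) < 1/2) (by norm_num : (0:ℝ) < 1/2) (by norm_num)
    simp only [smul_eq_mul, mul_zero, zero_add, hf0] at hsc
    have hx2 : (1:ℝ)/2 * x = x/2 := by ring
    rw [hx2] at hsc
    rw [lt_div_iff₀ hx0]
    nlinarith [hsc, ht]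
  -- beyond b the derivative is ≤ -f x / x
  have key : ∀ x, b < x → x ≤ a → f' x ≤ -(f x / x) := by
    intro x hbx hxa
    have hx0 : 0 < x := lt_of_le_of_lt hb0 hbx
    have hx : x ∈ Ioc (0:ℝ) a := ⟨hx0, hxa⟩
    have hnot : ¬ (|f' x| < f x / x) := by
      intro h
      exact absurd (le_csSup hbdd (show x ∈ S from ⟨hx, h⟩)) (not_le.2 hbx)
    push_neg at hnot
    have h1 := fderiv_lt x hx
    rcases le_or_gt 0 (f' x) with hge | hltz
    · rw [abs_of_nonneg hge] at hnot; linarith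
    · rw [abs_of_neg hltz] at hnot; linarith
  -- f (2x) = 0 for x ∈ (b, a/2)
  have hz : ∀ x, b < x → x < a/2 → f (2*x) = 0 := by
    intro x hbx hx2
    have hx0 : 0 < x := lt_of_le_of_lt hb0 hbx
    have hxa : x ≤ a := by linarith
    have h2x : 2*x ∈ Icc (0:ℝ) a := ⟨by linarith, by linarith⟩
    have ht := tangent x ⟨hx0, hxa⟩ (2*x) h2x
    have hk := key x hbx hxa
    have hmul : f' x * x ≤ -(f x) := by
      have := mul_le_mul_of_nonneg_right hk (le_of_lt hx0)
      rwa [neg_mul, div_mul_cancel₀ _ (ne_of_gt hx0)] at this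
    have h0 : 0 ≤ f (2*x) := hnonneg _ h2x
    have : f (2*x) ≤ 0 := by nlinarith [ht]
    linarith
  -- pick two points and contradict strict concavity
  set x2 := (b + a/2)/2 with hx2def
  set x1 := (b + x2)/2 with hx1def
  have hbx2 : b < x2 := by simp only [hx2def]; linarith
  have hx2a : x2 < a/2 := by simp only [hx2def]; linarith
  have hbx1 : b < x1 := by simp only [hx1def]; linarith
  have hx12 : x1 < x2 := by simp only [hx1def]; linarith
  have hx1a : x1 < a/2 := lt_trans hx12 hx2a
  have h1 := hz x1 hbx1 hx1a
  have h2 := hz x2 hbx2 hx2a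
  have hx1pos : 0 < x1 := lt_of_le_of_lt hb0 hbx1
  have hx2pos : 0 < x2 := lt_of_le_of_lt hb0 hbx2
  have h2x2mem : 2*x2 ∈ Icc (0:ℝ) a := ⟨by linarith, by linarith⟩
  have hne02 : (0:ℝ) ≠ 2*x2 := ne_of_lt (by linarith)
  have htpos : (0:ℝ) < 1 - x1/x2 := by
    have : x1/x2 < 1 := (div_lt_one hx2pos).2 hx12
    linarith
  have hspos : (0:ℝ) < x1/x2 := div_pos hx1pos hx2pos
  have hsum : (1 - x1/x2) + x1/x2 = 1 := by ring
  have hsc := hconc.2 (show (0:ℝ) ∈ Icc (0:ℝ) a from ⟨le_rfl, le_of_lt ha⟩)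
    h2x2mem hne02 htpos hspos hsum
  have hcomb : (1 - x1/x2) • (0:ℝ) + (x1/x2) • (2*x2) = 2*x1 := by
    simp only [smul_eq_mul]; field_simp; ring
  rw [hcomb] at hsc
  simp only [smul_eq_mul, hf0, h1, h2, mul_zero, add_zero] at hsc
  exact lt_irrefl 0 hsc
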